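/- Let 𝔖 be a finite step set. Let S₀(x,t) be the generating function of walks on the slit plane ending on the x-axis (weighted by x^(ending abscissa) t^(length)), let B(x⁻¹,t) be the generating function of paths that start at (0,0) and visit the set {(-k,0) : k ≥ 0} only at their endpoint (after the start), and let S_x(x;t) = CT_y 1/(1 - Γ(𝔖)) be the generating function of bilateral walks (paths ending on the x-axis). Then S₀(x,t) · 1/(1 - B(x⁻¹,t)) = S_x(x;t). -/

import Mathlib

noncomputable section

/-- The generating function of a set `P` of lattice paths (lists of steps in
`ℤ²`), a path of length `n` ending at `(i,j)` being weighted `x^i t^n`;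
coefficients are Laurent polynomials in `x`. -/
def walksGF (P : Set (List (ℤ × ℤ))) : PowerSeries (LaurentPolynomial ℂ) :=
  PowerSeries.mk fun n =>
    ∑ᶠ l ∈ {l : List (ℤ × ℤ) | l ∈ P ∧ l.length = n},
      LaurentPolynomial.T (l.map Prod.fst).sum

/-- Bilateral walks: paths with steps in `S` whose total `y`-displacement is `0`. -/
def bilateralSet (S : Finset (ℤ × ℤ)) : Set (List (ℤ × ℤ)) :=
  {l | (∀ s ∈ l, s ∈ S) ∧ (l.map Prod.snd).sum = 0}

/-- Walks on the slit plane ending on the `x`-axis: paths with steps in `S`,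
ending on the `x`-axis, never visiting a point `(-k,0)`, `k ≥ 0`, after the
starting point. -/
def slitAxisSet (S : Finset (ℤ × ℤ)) : Set (List (ℤ × ℤ)) :=
  {l | (∀ s ∈ l, s ∈ S) ∧ (l.map Prod.snd).sum = 0 ∧
    ∀ i : ℕ, 0 < i → i ≤ l.length →
      ¬(((l.take i).map Prod.snd).sum = 0 ∧ ((l.take i).map Prod.fst).sum ≤ 0)}

/-- Paths that visit the half line `{(-k,0) : k ≥ 0}` only at their endpoint
(after the start). -/
def bSet (S : Finset (ℤ × ℤ)) : Set (List (ℤ × ℤ)) :=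
  {l | l ≠ [] ∧ (∀ s ∈ l, s ∈ S) ∧
    (l.map Prod.snd).sum = 0 ∧ (l.map Prod.fst).sum ≤ 0 ∧
    ∀ i : ℕ, 0 < i → i < l.length →
      ¬(((l.take i).map Prod.snd).sum = 0 ∧ ((l.take i).map Prod.fst).sum ≤ 0)}

open LaurentPolynomial

/-- The "visit the half-line at time `i`" predicate. -/
def Qp (l : List (ℤ × ℤ)) (i : ℕ) : Prop :=
  0 < i ∧ i ≤ l.length ∧
    ((l.take i).map Prod.snd).sum = 0 ∧ ((l.take i).map Prod.fst).sum ≤ 0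

instance (l : List (ℤ × ℤ)) : DecidablePred (Qp l) := fun i => by
  unfold Qp; infer_instance

open Classical in
/-- The first positive time at which a walk visits the half line. -/
def firstHit (l : List (ℤ × ℤ)) : ℕ :=
  if h : ∃ i, Qp l i then Nat.find h else 0

lemma sum_take_drop (f : ℤ × ℤ → ℤ) (l : List (ℤ × ℤ)) (k : ℕ) :
    ((l.take k).map f).sum + ((l.drop k).map f).sum = (l.map f).sum := by
  rw [← List.sum_append, ← List.map_append, List.take_append_drop]

lemma concat_mem_bilateral {S : Finset (ℤ × ℤ)} {u v : List (ℤ × ℤ)}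
    (hu : u ∈ bSet S) (hv : v ∈ bilateralSet S) : u ++ v ∈ bilateralSet S := by
  refine ⟨fun s hs => ?_, ?_⟩
  · rcases List.mem_append.mp hs with h | h
    · exact hu.2.1 s h
    · exact hv.1 s h
  · rw [List.map_append, List.sum_append, hu.2.2.1, hv.2, add_zero]

lemma Qp_length_concat {S : Finset (ℤ × ℤ)} {u : List (ℤ × ℤ)} (v : List (ℤ × ℤ))
    (hu : u ∈ bSet S) : Qp (u ++ v) u.length := by
  refine ⟨List.length_pos_iff.mpr hu.1, by simp, ?_, ?_⟩
  · rw [List.take_left]; exact hu.2.2.1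
  · rw [List.take_left]; exact hu.2.2.2.1

lemma concat_not_slit {S : Finset (ℤ × ℤ)} {u v : List (ℤ × ℤ)}
    (hu : u ∈ bSet S) : u ++ v ∉ slitAxisSet S := by
  intro hs
  obtain ⟨h1, h2, h3, h4⟩ := Qp_length_concat v hu
  exact hs.2.2 u.length h1 h2 ⟨h3, h4⟩

lemma firstHit_concat {S : Finset (ℤ × ℤ)} {u : List (ℤ × ℤ)} (v : List (ℤ × ℤ))
    (hu : u ∈ bSet S) : firstHit (u ++ v) = u.length := by
  have h : ∃ i, Qp (u ++ v) i := ⟨u.length, Qp_length_concat v hu⟩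
  rw [firstHit, dif_pos h, Nat.find_eq_iff]
  refine ⟨Qp_length_concat v hu, fun k hk hQ => ?_⟩
  obtain ⟨hk0, hkl, hy, hx⟩ := hQ
  rw [List.take_append_of_le_length (le_of_lt hk)] at hy hx
  exact hu.2.2.2.2 k hk0 hk ⟨hy, hx⟩

lemma exists_Qp {S : Finset (ℤ × ℤ)} {l : List (ℤ × ℤ)}
    (hb : l ∈ bilateralSet S) (hs : l ∉ slitAxisSet S) : ∃ i, Qp l i := by
  have h : ¬ (∀ i : ℕ, 0 < i → i ≤ l.length →
      ¬(((l.take i).map Prod.snd).sum = 0 ∧ ((l.take i).map Prod.fst).sum ≤ 0)) :=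
    fun hC => hs ⟨hb.1, hb.2, hC⟩
  push_neg at h
  obtain ⟨i, h1, h2, h3, h4⟩ := h
  exact ⟨i, h1, h2, h3, h4⟩

lemma firstHit_spec {l : List (ℤ × ℤ)} (h : ∃ i, Qp l i) : Qp l (firstHit l) := by
  rw [firstHit, dif_pos h]; exact Nat.find_spec h

lemma firstHit_min {l : List (ℤ × ℤ)} (h : ∃ i, Qp l i) {k : ℕ}
    (hk : k < firstHit l) : ¬ Qp l k := by
  rw [firstHit, dif_pos h] at hk; exact Nat.find_min h hk

lemma take_firstHit_mem_bSet {S : Finset (ℤ × ℤ)} {l : List (ℤ × ℤ)}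
    (hex : ∃ i, Qp l i) (hl : ∀ s ∈ l, s ∈ S) : l.take (firstHit l) ∈ bSet S := by
  obtain ⟨h0, hlen, hy, hx⟩ := firstHit_spec hex
  have hlt : (l.take (firstHit l)).length = firstHit l := by
    rw [List.length_take]; omega
  refine ⟨?_, fun s hs => hl s (List.take_subset _ _ hs), hy, hx, ?_⟩
  · intro hnil
    rw [hnil] at hlt
    simp at hlt
    omega
  · intro i hi0 hilt hbad
    rw [hlt] at hilt
    rw [List.take_take, min_eq_left (le_of_lt hilt)] at hbad
    exact firstHit_min hex hilt ⟨hi0, by omega, hbad.1, hbad.2⟩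

lemma drop_firstHit_mem_bilateral {S : Finset (ℤ × ℤ)} {l : List (ℤ × ℤ)}
    (hex : ∃ i, Qp l i) (hl : l ∈ bilateralSet S) :
    l.drop (firstHit l) ∈ bilateralSet S := by
  obtain ⟨h0, hlen, hy, hx⟩ := firstHit_spec hex
  refine ⟨fun s hs => hl.1 s (List.drop_subset _ _ hs), ?_⟩
  have := sum_take_drop Prod.snd l (firstHit l)
  rw [hy, hl.2] at this
  omega

lemma finite_level (S : Finset (ℤ × ℤ)) (n : ℕ) :
    {l : List (ℤ × ℤ) | (∀ s ∈ l, s ∈ S) ∧ l.length = n}.Finite := by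
  induction n with
  | zero =>
      apply Set.Finite.subset (Set.finite_singleton ([] : List (ℤ × ℤ)))
      rintro l ⟨-, hl⟩
      simp [List.length_eq_zero_iff.mp hl]
  | succ n ih =>
      apply Set.Finite.subset (Set.Finite.image2 (· :: ·) S.finite_toSet ih)
      rintro l ⟨hmem, hl⟩
      cases l with
      | nil => simp at hl
      | cons a t =>
          exact Set.mem_image2_of_mem (hmem a (by simp))
            ⟨fun s hs => hmem s (by simp [hs]), by simpa using hl⟩

lemma finite_levelP (S : Finset (ℤ × ℤ)) (P : Set (List (ℤ × ℤ)))
    (hP : ∀ l ∈ P, ∀ s ∈ l, s ∈ S) (n : ℕ) :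
    {l : List (ℤ × ℤ) | l ∈ P ∧ l.length = n}.Finite :=
  (finite_level S n).subset fun l hl => ⟨hP l hl.1, hl.2⟩

/-- The finset of paths in `P` of length `n`. -/
def levelFinset (S : Finset (ℤ × ℤ)) (P : Set (List (ℤ × ℤ)))
    (hP : ∀ l ∈ P, ∀ s ∈ l, s ∈ S) (n : ℕ) : Finset (List (ℤ × ℤ)) :=
  (finite_levelP S P hP n).toFinset

lemma mem_levelFinset {S P hP n} {l : List (ℤ × ℤ)} :
    l ∈ levelFinset S P hP n ↔ l ∈ P ∧ l.length = n := by
  simp [levelFinset, Set.Finite.mem_toFinset]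

lemma coeff_walksGF (S : Finset (ℤ × ℤ)) (P : Set (List (ℤ × ℤ)))
    (hP : ∀ l ∈ P, ∀ s ∈ l, s ∈ S) (n : ℕ) :
    (PowerSeries.coeff n) (walksGF P) =
      ∑ l ∈ levelFinset S P hP n, T (l.map Prod.fst).sum := by
  rw [walksGF, PowerSeries.coeff_mk, ← finsum_mem_coe_finset, levelFinset,
    Set.Finite.coe_toFinset]

lemma steps_bilateral (S : Finset (ℤ × ℤ)) :
    ∀ l ∈ bilateralSet S, ∀ s ∈ l, s ∈ S := fun _ h => h.1

lemma steps_slit (S : Finset (ℤ × ℤ)) :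
    ∀ l ∈ slitAxisSet S, ∀ s ∈ l, s ∈ S := fun _ h => h.1

lemma steps_bSet (S : Finset (ℤ × ℤ)) :
    ∀ l ∈ bSet S, ∀ s ∈ l, s ∈ S := fun _ h => h.2.1

lemma key (S : Finset (ℤ × ℤ)) :
    walksGF (bilateralSet S) =
      walksGF (slitAxisSet S) + walksGF (bSet S) * walksGF (bilateralSet S) := by
  ext n : 1
  rw [map_add, PowerSeries.coeff_mul,
    coeff_walksGF S _ (steps_bilateral S) n, coeff_walksGF S _ (steps_slit S) n]
  have hprod : ∀ p ∈ Finset.HasAntidiagonal.antidiagonal n,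
      (PowerSeries.coeff p.1) (walksGF (bSet S)) *
        (PowerSeries.coeff p.2) (walksGF (bilateralSet S)) =
      ∑ q ∈ (levelFinset S (bSet S) (steps_bSet S) p.1) ×ˢ
          (levelFinset S (bilateralSet S) (steps_bilateral S) p.2),
        T ((q.1 ++ q.2).map Prod.fst).sum := by
    intro p _
    rw [coeff_walksGF S _ (steps_bSet S), coeff_walksGF S _ (steps_bilateral S),
      Finset.sum_mul_sum, Finset.sum_product]
    refine Finset.sum_congr rfl fun u _ => Finset.sum_congr rfl fun v _ => ?_
    rw [List.map_append, List.sum_append, T_add]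
  rw [Finset.sum_congr rfl hprod]
  have hsub : levelFinset S (slitAxisSet S) (steps_slit S) n ⊆
      levelFinset S (bilateralSet S) (steps_bilateral S) n := by
    intro l hl
    rw [mem_levelFinset] at hl ⊢
    exact ⟨⟨hl.1.1, hl.1.2.1⟩, hl.2⟩
  rw [← Finset.sum_sdiff hsub, add_comm]
  rw [Finset.sum_sigma' (Finset.HasAntidiagonal.antidiagonal n)
    (fun p => (levelFinset S (bSet S) (steps_bSet S) p.1) ×ˢ
      (levelFinset S (bilateralSet S) (steps_bilateral S) p.2))
    (fun _ q => T ((q.1 ++ q.2).map Prod.fst).sum)]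
  apply congrArg
  refine (Finset.sum_nbij' (fun q => q.2.1 ++ q.2.2)
    (fun l => ⟨(firstHit l, n - firstHit l), (l.take (firstHit l), l.drop (firstHit l))⟩)
    ?_ ?_ ?_ ?_ ?_).symm
  · -- concatenation lands in bilateral \ slit
    rintro ⟨p, u, v⟩ hq
    rw [Finset.mem_sigma, Finset.mem_product, mem_levelFinset, mem_levelFinset] at hq
    obtain ⟨hp, ⟨hu, hul⟩, hv, hvl⟩ := hq
    dsimp only at hp hu hul hv hvl ⊢
    rw [Finset.mem_sdiff, mem_levelFinset, mem_levelFinset]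
    refine ⟨⟨concat_mem_bilateral hu hv, ?_⟩, fun hc => concat_not_slit hu hc.1⟩
    rw [List.length_append, hul, hvl]
    exact Finset.HasAntidiagonal.mem_antidiagonal.mp hp
  · -- splitting lands in the sigma set
    intro l hl
    rw [Finset.mem_sdiff, mem_levelFinset, mem_levelFinset] at hl
    obtain ⟨⟨hb, hln⟩, hns⟩ := hl
    have hns' : l ∉ slitAxisSet S := fun hc => hns ⟨hc, hln⟩
    have hex := exists_Qp hb hns'
    obtain ⟨h0, hlen, -, -⟩ := firstHit_spec hex
    rw [Finset.mem_sigma, Finset.mem_product, mem_levelFinset, mem_levelFinset]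
    dsimp only
    refine ⟨Finset.HasAntidiagonal.mem_antidiagonal.mpr ?_, ⟨take_firstHit_mem_bSet hex hb.1, ?_⟩,
      drop_firstHit_mem_bilateral hex hb, ?_⟩
    · omega
    · rw [List.length_take]; omega
    · rw [List.length_drop]; omega
  · -- left inverse
    rintro ⟨p, u, v⟩ hq
    rw [Finset.mem_sigma, Finset.mem_product, mem_levelFinset, mem_levelFinset] at hq
    obtain ⟨hp, ⟨hu, hul⟩, hv, hvl⟩ := hq
    dsimp only at hp hu hul hv hvl ⊢
    have hp' : p.1 + p.2 = n := Finset.HasAntidiagonal.mem_antidiagonal.mp hp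
    have hfh : firstHit (u ++ v) = u.length := firstHit_concat v hu
    have h2 : n - p.1 = p.2 := by omega
    rw [hfh, List.take_left, List.drop_left, hul, h2]
  · -- right inverse
    intro l hl
    dsimp only
    exact List.take_append_drop _ l
  · -- weights agree
    rintro ⟨p, u, v⟩ _
    rfl


/-- **The slit plane factorization (equation (1)).**
For a finite step set `𝔖`, with `S₀(x,t)` the generating function of walks on
the slit plane ending on the `x`-axis, `B(x⁻¹,t)` the generating function of
paths hitting `{(-k,0) : k ≥ 0}` only at their endpoint, and `S_x(x;t)` the
generating function of bilateral walks, one has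
`S₀(x,t) · 1/(1 - B(x⁻¹,t)) = S_x(x;t)`, stated in the cross-multiplied form
`S₀ = S_x · (1 - B)`. -/
theorem slit_plane_factorization (S : Finset (ℤ × ℤ)) :
    walksGF (slitAxisSet S) = walksGF (bilateralSet S) * (1 - walksGF (bSet S)) := by
  linear_combination -key S
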